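/- Let G = K_{n_1,...,n_k} be a complete k-partite graph, and let m ≥ 0 be the number of partite sets of cardinality 1 (equivalently, the number of full vertices of G). Then IC(G) = 2k − m. -/

import Mathlib

namespace ICNL

variable {V : Type*}

/-- `S` is a dominating set of `G`. -/
def Dominating (G : SimpleGraph V) (S : Set V) : Prop :=
  ∀ v : V, v ∈ S ∨ ∃ u ∈ S, G.Adj u v

/-- `S` is an independent set of `G`. -/
def IndepSet (G : SimpleGraph V) (S : Set V) : Prop :=
  ∀ ⦃u : V⦄, u ∈ S → ∀ ⦃v : V⦄, v ∈ S → ¬ G.Adj u v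

/-- `S` is an independent dominating set of `G`. -/
def IndepDom (G : SimpleGraph V) (S : Set V) : Prop :=
  IndepSet G S ∧ Dominating G S

/-- `A` and `B` form an independent coalition in `G`. -/
def ICCoalition (G : SimpleGraph V) (A B : Set V) : Prop :=
  Disjoint A B ∧ IndepSet G A ∧ IndepSet G B ∧
    ¬ IndepDom G A ∧ ¬ IndepDom G B ∧ IndepDom G (A ∪ B)

/-- `π` is a partition of the vertex set into nonempty classes. -/
def IsPartition (π : Finset (Finset V)) : Prop :=
  (∀ A ∈ π, A.Nonempty) ∧ ∀ v : V, ∃! A : Finset V, A ∈ π ∧ v ∈ A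

/-- `π` is an independent coalition partition of `G`. -/
def IsICPartition (G : SimpleGraph V) (π : Finset (Finset V)) : Prop :=
  IsPartition π ∧
    ∀ A ∈ π, (∃ v : V, (A : Set V) = {v} ∧ Dominating G (A : Set V)) ∨
      (¬ IndepDom G (A : Set V) ∧
        ∃ B ∈ π, B ≠ A ∧ ICCoalition G (A : Set V) (B : Set V))

/-- The independent coalition number: the maximum number of classes of an
ic-partition of `G`. -/
noncomputable def IC (G : SimpleGraph V) : ℕ :=
  sSup {k | ∃ π : Finset (Finset V), IsICPartition G π ∧ π.card = k}


section Aux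
variable {k : ℕ} {n : Fin k → ℕ}

/-- The graph in question. -/
abbrev Gr (n : Fin k → ℕ) : SimpleGraph ((i : Fin k) × Fin (n i)) :=
  SimpleGraph.completeMultipartiteGraph fun i => Fin (n i)

/-- The `i`-th partite set. -/
def PSet (n : Fin k → ℕ) (i : Fin k) : Set ((i : Fin k) × Fin (n i)) := {v | v.1 = i}

lemma gr_adj {u v : (i : Fin k) × Fin (n i)} : (Gr n).Adj u v ↔ u.1 ≠ v.1 := Iff.rfl

lemma mem_PSet {i : Fin k} {v : (i : Fin k) × Fin (n i)} : v ∈ PSet n i ↔ v.1 = i := Iff.rfl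

lemma indepSet_iff {S : Set ((i : Fin k) × Fin (n i))} :
    IndepSet (Gr n) S ↔ ∀ u ∈ S, ∀ v ∈ S, u.1 = v.1 := by
  constructor
  · intro h u hu v hv
    by_contra hne
    exact h hu hv (gr_adj.2 hne)
  · intro h u hu v hv hadj
    exact gr_adj.1 hadj (h u hu v hv)

lemma indepDom_iff (hn : ∀ i, 1 ≤ n i) {S : Set ((i : Fin k) × Fin (n i))}
    (hS : S.Nonempty) : IndepDom (Gr n) S ↔ ∃ i, S = PSet n i := by
  constructor
  · rintro ⟨hind, hdom⟩
    obtain ⟨u, hu⟩ := hS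
    refine ⟨u.1, Set.Subset.antisymm (fun v hv => (indepSet_iff.1 hind v hv u hu)) ?_⟩
    intro v hv
    rcases hdom v with h | ⟨w, hw, hadj⟩
    · exact h
    · exact absurd (indepSet_iff.1 hind w hw u hu) (by
        have := gr_adj.1 hadj
        rw [mem_PSet] at hv
        intro h; exact this (h.trans hv.symm))
  · rintro ⟨i, rfl⟩
    constructor
    · rw [indepSet_iff]
      intro u hu v hv
      exact (mem_PSet.1 hu).trans (mem_PSet.1 hv).symm
    · intro v
      by_cases hv : v.1 = i
      · exact Or.inl hv
      · refine Or.inr ⟨⟨i, ⟨0, hn i⟩⟩, rfl, fun h => hv ?_⟩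
        simpa using h.symm

lemma not_indepDom_of_ssub (hn : ∀ i, 1 ≤ n i) {S : Set ((i : Fin k) × Fin (n i))}
    (hne : S.Nonempty) {i : Fin k} (hsub : S ⊆ PSet n i) (hprop : S ≠ PSet n i) :
    ¬ IndepDom (Gr n) S := by
  intro h
  obtain ⟨j, rfl⟩ := (indepDom_iff hn hne).1 h
  obtain ⟨v, hv⟩ := hne
  have h1 : v.1 = j := hv
  have h2 : v.1 = i := hsub hv
  rw [h1] at h2
  subst h2
  exact hprop rfl

lemma card_of_icPartition (hn : ∀ i, 1 ≤ n i) {π : Finset (Finset ((i : Fin k) × Fin (n i)))}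
    (hπ : IsICPartition (Gr n) π) :
    π.card = ∑ i : Fin k, (if n i = 1 then 1 else 2) := by
  have uniq : ∀ {A B : Finset ((i : Fin k) × Fin (n i))} {v}, A ∈ π → v ∈ A → B ∈ π → v ∈ B →
      A = B := by
    intro A B v hA hvA hB hvB
    exact ((hπ.1.2 v).unique ⟨hA, hvA⟩ ⟨hB, hvB⟩)
  have same_fst : ∀ A ∈ π, ∀ u ∈ A, ∀ v ∈ A, u.1 = v.1 := by
    intro A hA u hu v hv
    rcases hπ.2 A hA with ⟨x, hx, -⟩ | ⟨-, _, -, -, hc⟩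
    · have hu' : u ∈ ({x} : Set _) := hx ▸ (Finset.mem_coe.2 hu)
      have hv' : v ∈ ({x} : Set _) := hx ▸ (Finset.mem_coe.2 hv)
      rw [Set.mem_singleton_iff] at hu' hv'
      rw [hu', hv']
    · exact indepSet_iff.1 hc.2.1 u (Finset.mem_coe.2 hu) v (Finset.mem_coe.2 hv)
  rcases Nat.eq_zero_or_pos k with hk | hk
  · subst hk
    have : π = ∅ := by
      rw [Finset.eq_empty_iff_forall_notMem]
      intro A hA
      obtain ⟨v, -⟩ := hπ.1.1 A hA
      exact v.1.elim0
    simp [this]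
  · set i0 : Fin k := ⟨0, hk⟩ with hi0
    set fidx : Finset ((i : Fin k) × Fin (n i)) → Fin k :=
      fun A => if h : A.Nonempty then h.choose.1 else i0 with hfidx
    have fidx_eq : ∀ {A v}, A ∈ π → v ∈ A → fidx A = v.1 := by
      intro A v hA hv
      have hne : A.Nonempty := ⟨v, hv⟩
      rw [hfidx]
      simp only [dif_pos hne]
      exact same_fst A hA _ hne.choose_spec v hv
    rw [Finset.card_eq_sum_card_fiberwise (f := fidx) (t := Finset.univ)
      (fun x _ => Finset.mem_univ _)]
    apply Finset.sum_congr rfl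
    intro i _
    by_cases h1 : n i = 1
    · rw [if_pos h1]
      set v : (i : Fin k) × Fin (n i) := ⟨i, ⟨0, hn i⟩⟩ with hv
      obtain ⟨A, ⟨hAπ, hvA⟩, -⟩ := hπ.1.2 v
      have hset : (π.filter fun C => fidx C = i) = {A} := by
        rw [Finset.eq_singleton_iff_unique_mem]
        refine ⟨?_, ?_⟩
        · exact Finset.mem_filter.2 ⟨hAπ, fidx_eq hAπ hvA⟩
        · intro B hB
          rw [Finset.mem_filter] at hB
          obtain ⟨hBπ, hBi⟩ := hB
          have hne : B.Nonempty := hπ.1.1 B hBπ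
          obtain ⟨w, hw⟩ := hne
          have hw1 : w.1 = i := by rw [← fidx_eq hBπ hw, hBi]
          have hwv : w = v := by
            obtain ⟨w1, w2⟩ := w
            simp only at hw1
            subst hw1
            have hlt : (w2 : ℕ) < 1 := by have := w2.isLt; omega
            exact congrArg (Sigma.mk w1) (Fin.ext (by simpa using Nat.lt_one_iff.1 hlt))
          exact uniq hBπ (hwv ▸ hw) hAπ hvA
      rw [hset, Finset.card_singleton]
    · rw [if_neg h1]
      have h2 : 2 ≤ n i := by have := hn i; omega
      set v : (i : Fin k) × Fin (n i) := ⟨i, ⟨0, hn i⟩⟩ with hv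
      obtain ⟨A, ⟨hAπ, hvA⟩, -⟩ := hπ.1.2 v
      rcases hπ.2 A hAπ with ⟨u, hAu, hdom⟩ | ⟨hnd, B, hBπ, hBA, hcoal⟩
      · exfalso
        have hind : IndepSet (Gr n) (A : Set _) := by
          rw [indepSet_iff]
          intro a ha b hb
          rw [hAu, Set.mem_singleton_iff] at ha hb
          rw [ha, hb]
        have hid : IndepDom (Gr n) (A : Set _) := ⟨hind, hdom⟩
        obtain ⟨j, hj⟩ := (indepDom_iff hn ⟨v, Finset.mem_coe.2 hvA⟩).1 hid
        have hji : j = i := by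
          have : v ∈ PSet n j := hj ▸ (Finset.mem_coe.2 hvA)
          exact (mem_PSet.1 this).symm
        subst hji
        set w : (i : Fin k) × Fin (n i) := ⟨j, ⟨1, h2⟩⟩ with hwdef
        have hwA : w ∈ (A : Set _) := hj ▸ (mem_PSet.2 rfl)
        have hvu : v = u := by
          have := hAu ▸ (Finset.mem_coe.2 hvA); rwa [Set.mem_singleton_iff] at this
        have hwu : w = u := by
          have := hAu ▸ hwA; rwa [Set.mem_singleton_iff] at this
        rw [← hvu] at hwu
        simp [hwdef, hv, Fin.ext_iff] at hwu
      · have hidu : IndepDom (Gr n) ((A : Set _) ∪ (B : Set _)) := hcoal.2.2.2.2.2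
        obtain ⟨j, hj⟩ := (indepDom_iff hn ⟨v, Or.inl (Finset.mem_coe.2 hvA)⟩).1 hidu
        have hji : j = i := by
          have : v ∈ PSet n j := hj ▸ (Or.inl (Finset.mem_coe.2 hvA))
          exact (mem_PSet.1 this).symm
        subst hji
        have hset : (π.filter fun C => fidx C = j) = {A, B} := by
          ext C
          rw [Finset.mem_filter, Finset.mem_insert, Finset.mem_singleton]
          constructor
          · rintro ⟨hCπ, hCj⟩
            obtain ⟨w, hw⟩ := hπ.1.1 C hCπ
            have hw1 : w.1 = j := by rw [← fidx_eq hCπ hw, hCj]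
            have hwAB : w ∈ (A : Set _) ∪ (B : Set _) := hj ▸ (mem_PSet.2 hw1)
            rcases hwAB with hwA | hwB
            · exact Or.inl (uniq hCπ hw hAπ (Finset.mem_coe.1 hwA))
            · exact Or.inr (uniq hCπ hw hBπ (Finset.mem_coe.1 hwB))
          · rintro (h | h)
            · subst h; exact ⟨hAπ, fidx_eq hAπ hvA⟩
            · subst h
              obtain ⟨w, hw⟩ := hπ.1.1 _ hBπ
              refine ⟨hBπ, ?_⟩
              have hwAB : w ∈ (A : Set _) ∪ _ := Or.inr (Finset.mem_coe.2 hw)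
              have hw1 : w.1 = j := mem_PSet.1 (hj ▸ hwAB)
              exact (fidx_eq hBπ hw).trans hw1
        rw [hset, Finset.card_pair (Ne.symm hBA)]

/-- The `i`-th partite set as a finset. -/
def partF (n : Fin k → ℕ) (i : Fin k) : Finset ((j : Fin k) × Fin (n j)) :=
  Finset.univ.filter fun v => v.1 = i

/-- A base point of the `i`-th partite set. -/
def vz (hn : ∀ i, 1 ≤ n i) (i : Fin k) : (j : Fin k) × Fin (n j) := ⟨i, ⟨0, hn i⟩⟩

/-- The classes of the constructed partition within the `i`-th partite set. -/
def cls (hn : ∀ i, 1 ≤ n i) (i : Fin k) : Finset (Finset ((j : Fin k) × Fin (n j))) :=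
  if n i = 1 then {partF n i} else {{vz hn i}, partF n i \ {vz hn i}}

/-- The constructed ic-partition. -/
def pic (hn : ∀ i, 1 ≤ n i) : Finset (Finset ((j : Fin k) × Fin (n j))) :=
  Finset.univ.biUnion (cls hn)

lemma mem_partF {i : Fin k} {v : (j : Fin k) × Fin (n j)} : v ∈ partF n i ↔ v.1 = i := by
  simp [partF]

lemma coe_partF {i : Fin k} : (partF n i : Set ((j : Fin k) × Fin (n j))) = PSet n i := by
  ext v; simp [partF, PSet]

lemma eq_vz (hn : ∀ i, 1 ≤ n i) {i : Fin k} (h1 : n i = 1) {w : (j : Fin k) × Fin (n j)}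
    (hw : w.1 = i) : w = vz hn i := by
  obtain ⟨w1, w2⟩ := w
  simp only at hw
  subst hw
  have hlt : (w2 : ℕ) < 1 := by have := w2.isLt; omega
  exact congrArg (Sigma.mk w1) (Fin.ext (by simpa using Nat.lt_one_iff.1 hlt))

lemma vz_mem_partF (hn : ∀ i, 1 ≤ n i) {i : Fin k} : vz hn i ∈ partF n i := mem_partF.2 rfl

lemma w1_def (hn : ∀ i, 1 ≤ n i) {i : Fin k} (h2 : 2 ≤ n i) :
    (⟨i, ⟨1, h2⟩⟩ : (j : Fin k) × Fin (n j)) ∈ partF n i \ {vz hn i} := by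
  rw [Finset.mem_sdiff, Finset.mem_singleton]
  refine ⟨mem_partF.2 rfl, ?_⟩
  intro h
  rw [vz] at h
  have := congrArg Sigma.fst h
  simp only at this
  have h2' := (Sigma.mk.inj_iff.1 h).2
  rw [heq_iff_eq, Fin.ext_iff] at h2'
  simp at h2'

lemma cls_spec (hn : ∀ i, 1 ≤ n i) {i : Fin k} {A : Finset ((j : Fin k) × Fin (n j))}
    (hA : A ∈ cls hn i) : A.Nonempty ∧ ∀ v ∈ A, v.1 = i := by
  rw [cls] at hA
  by_cases h1 : n i = 1
  · rw [if_pos h1, Finset.mem_singleton] at hA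
    subst hA
    exact ⟨⟨vz hn i, vz_mem_partF hn⟩, fun v hv => mem_partF.1 hv⟩
  · rw [if_neg h1, Finset.mem_insert, Finset.mem_singleton] at hA
    have h2 : 2 ≤ n i := by have := hn i; omega
    rcases hA with rfl | rfl
    · refine ⟨⟨vz hn i, Finset.mem_singleton_self _⟩, fun v hv => ?_⟩
      rw [Finset.mem_singleton] at hv
      rw [hv]; rfl
    · refine ⟨⟨_, w1_def hn h2⟩, fun v hv => ?_⟩
      exact mem_partF.1 (Finset.mem_sdiff.1 hv).1

lemma mem_pic (hn : ∀ i, 1 ≤ n i) {A : Finset ((j : Fin k) × Fin (n j))} :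
    A ∈ pic hn ↔ ∃ i, A ∈ cls hn i := by
  simp [pic]

lemma psubset_ne (hn : ∀ i, 1 ≤ n i) {i : Fin k} (h2 : 2 ≤ n i) :
    ¬ IndepDom (Gr n) ({vz hn i} : Set ((j : Fin k) × Fin (n j))) := by
  apply not_indepDom_of_ssub (i := i) hn ⟨vz hn i, Set.mem_singleton _⟩ (by
    rintro v (rfl : v = vz hn i); exact rfl)
  intro h
  have hw : (⟨i, ⟨1, h2⟩⟩ : (j : Fin k) × Fin (n j)) ∈ PSet n i := rfl
  rw [← h, Set.mem_singleton_iff] at hw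
  have := (Finset.mem_sdiff.1 (w1_def hn h2)).2
  rw [Finset.mem_singleton] at this
  exact this hw

lemma sdiff_not_indepDom (hn : ∀ i, 1 ≤ n i) {i : Fin k} (h2 : 2 ≤ n i) :
    ¬ IndepDom (Gr n) ((partF n i \ {vz hn i} : Finset _) : Set ((j : Fin k) × Fin (n j))) := by
  apply not_indepDom_of_ssub hn ⟨_, Finset.mem_coe.2 (w1_def hn h2)⟩
    (fun v hv => mem_PSet.2 (mem_partF.1 (Finset.mem_sdiff.1 (Finset.mem_coe.1 hv)).1))
  intro h
  have hv : vz hn i ∈ PSet n i := rfl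
  rw [← h, Finset.mem_coe, Finset.mem_sdiff, Finset.mem_singleton] at hv
  exact hv.2 rfl

lemma union_eq_partF (hn : ∀ i, 1 ≤ n i) {i : Fin k} :
    (({vz hn i} : Finset _) : Set ((j : Fin k) × Fin (n j))) ∪
      ((partF n i \ {vz hn i} : Finset _) : Set _) = PSet n i := by
  rw [← Finset.coe_union, Finset.union_sdiff_of_subset
    (Finset.singleton_subset_iff.2 (vz_mem_partF hn)), coe_partF]

lemma coalition_pair (hn : ∀ i, 1 ≤ n i) {i : Fin k} (h2 : 2 ≤ n i) :
    ICCoalition (Gr n) (({vz hn i} : Finset _) : Set ((j : Fin k) × Fin (n j)))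
      ((partF n i \ {vz hn i} : Finset _) : Set _) := by
  refine ⟨?_, ?_, ?_, ?_, ?_, ?_⟩
  · exact Finset.disjoint_coe.2 Finset.sdiff_disjoint.symm
  · rw [indepSet_iff]
    rintro u hu v hv
    rw [Finset.mem_coe, Finset.mem_singleton] at hu hv
    rw [hu, hv]
  · rw [indepSet_iff]
    intro u hu v hv
    rw [Finset.mem_coe, Finset.mem_sdiff] at hu hv
    rw [mem_partF.1 hu.1, mem_partF.1 hv.1]
  · simpa using psubset_ne hn h2
  · exact sdiff_not_indepDom hn h2
  · rw [union_eq_partF hn]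
    exact (indepDom_iff (S := PSet n i) hn ⟨vz hn i, rfl⟩).2 ⟨i, rfl⟩

lemma pic_isICPartition (hn : ∀ i, 1 ≤ n i) : IsICPartition (Gr n) (pic hn) := by
  constructor
  · constructor
    · intro A hA
      obtain ⟨i, hi⟩ := (mem_pic hn).1 hA
      exact (cls_spec hn hi).1
    · intro v
      have hvcls : ∃ A ∈ cls hn v.1, v ∈ A := by
        by_cases h1 : n v.1 = 1
        · refine ⟨partF n v.1, ?_, mem_partF.2 rfl⟩
          rw [cls, if_pos h1]; exact Finset.mem_singleton_self _
        · by_cases hv : v = vz hn v.1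
          · refine ⟨{vz hn v.1}, ?_, by rw [Finset.mem_singleton]; exact hv⟩
            rw [cls, if_neg h1]; exact Finset.mem_insert_self _ _
          · refine ⟨partF n v.1 \ {vz hn v.1}, ?_, ?_⟩
            · rw [cls, if_neg h1]
              exact Finset.mem_insert_of_mem (Finset.mem_singleton_self _)
            · rw [Finset.mem_sdiff, Finset.mem_singleton]
              exact ⟨mem_partF.2 rfl, hv⟩
      obtain ⟨A, hAc, hvA⟩ := hvcls
      refine ⟨A, ⟨(mem_pic hn).2 ⟨v.1, hAc⟩, hvA⟩, ?_⟩
      rintro B ⟨hBp, hvB⟩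
      obtain ⟨j, hBc⟩ := (mem_pic hn).1 hBp
      have hj : j = v.1 := ((cls_spec hn hBc).2 v hvB).symm
      subst hj
      rw [cls] at hAc hBc
      by_cases h1 : n v.1 = 1
      · rw [if_pos h1, Finset.mem_singleton] at hAc hBc
        rw [hAc, hBc]
      · rw [if_neg h1, Finset.mem_insert, Finset.mem_singleton] at hAc hBc
        have hkey : ∀ C, (C = {vz hn v.1} ∨ C = partF n v.1 \ {vz hn v.1}) → v ∈ C →
            C = if v = vz hn v.1 then {vz hn v.1} else partF n v.1 \ {vz hn v.1} := by
          rintro C (rfl | rfl) hvC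
          · rw [Finset.mem_singleton] at hvC
            rw [if_pos hvC]
          · rw [Finset.mem_sdiff, Finset.mem_singleton] at hvC
            rw [if_neg hvC.2]
        rw [hkey B hBc hvB, hkey A hAc hvA]
  · intro A hA
    obtain ⟨i, hAc⟩ := (mem_pic hn).1 hA
    rw [cls] at hAc
    by_cases h1 : n i = 1
    · rw [if_pos h1, Finset.mem_singleton] at hAc
      subst hAc
      left
      refine ⟨vz hn i, ?_, ?_⟩
      · rw [coe_partF]
        ext w
        constructor
        · intro hw; exact eq_vz hn h1 hw
        · rintro (rfl : w = vz hn i); exact rfl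
      · rw [coe_partF]
        exact ((indepDom_iff (S := PSet n i) hn ⟨vz hn i, rfl⟩).2 ⟨i, rfl⟩).2
    · rw [if_neg h1, Finset.mem_insert, Finset.mem_singleton] at hAc
      have h2 : 2 ≤ n i := by have := hn i; omega
      right
      have hne : ({vz hn i} : Finset ((j : Fin k) × Fin (n j))) ≠ partF n i \ {vz hn i} := by
        intro h
        have := Finset.mem_singleton_self (vz hn i)
        rw [h, Finset.mem_sdiff, Finset.mem_singleton] at this
        exact this.2 rfl
      have hmem1 : ({vz hn i} : Finset ((j : Fin k) × Fin (n j))) ∈ pic hn := by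
        refine (mem_pic hn).2 ⟨i, ?_⟩
        rw [cls, if_neg h1]
        exact Finset.mem_insert_self _ _
      have hmem2 : partF n i \ {vz hn i} ∈ pic hn := by
        refine (mem_pic hn).2 ⟨i, ?_⟩
        rw [cls, if_neg h1]
        exact Finset.mem_insert_of_mem (Finset.mem_singleton_self _)
      rcases hAc with rfl | rfl
      · refine ⟨by simpa using psubset_ne hn h2, partF n i \ {vz hn i}, hmem2, hne.symm, ?_⟩
        exact coalition_pair hn h2
      · refine ⟨sdiff_not_indepDom hn h2, {vz hn i}, hmem1, hne, ?_⟩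
        obtain ⟨d1, d2, d3, d4, d5, d6⟩ := coalition_pair hn h2
        exact ⟨d1.symm, d3, d2, d5, d4, by rwa [Set.union_comm] at d6⟩

lemma pic_card (hn : ∀ i, 1 ≤ n i) :
    (pic hn).card = ∑ i : Fin k, (if n i = 1 then 1 else 2) := by
  rw [pic, Finset.card_biUnion]
  · apply Finset.sum_congr rfl
    intro i _
    rw [cls]
    by_cases h1 : n i = 1
    · rw [if_pos h1, if_pos h1, Finset.card_singleton]
    · have hne : ({vz hn i} : Finset ((j : Fin k) × Fin (n j))) ≠ partF n i \ {vz hn i} := by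
        intro h
        have := Finset.mem_singleton_self (vz hn i)
        rw [h, Finset.mem_sdiff, Finset.mem_singleton] at this
        exact this.2 rfl
      rw [if_neg h1, if_neg h1, Finset.card_pair hne]
  · intro i _ j _ hij
    rw [Function.onFun, Finset.disjoint_left]
    intro A hAi hAj
    obtain ⟨⟨v, hv⟩, hall⟩ := cls_spec hn hAi
    have h1 := hall v hv
    have h2 := (cls_spec hn hAj).2 v hv
    exact hij (h1 ▸ h2 ▸ rfl)

end Aux


theorem stmt_8 (k : ℕ) (n : Fin k → ℕ) (hn : ∀ i, 1 ≤ n i) (m : ℕ)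
    (hm : m = (Finset.univ.filter fun i => n i = 1).card) :
    IC (SimpleGraph.completeMultipartiteGraph fun i => Fin (n i)) = 2 * k - m := by
  have hsum : (∑ i : Fin k, if n i = 1 then 1 else 2) = 2 * k - m := by
    have h1 : m = ∑ i : Fin k, (if n i = 1 then 1 else 0) := by
      rw [hm, Finset.card_filter]
    have h2 : (∑ i : Fin k, if n i = 1 then 1 else 2) + ∑ i : Fin k, (if n i = 1 then 1 else 0)
        = 2 * k := by
      rw [← Finset.sum_add_distrib]
      have hpt : ∀ i : Fin k, ((if n i = 1 then 1 else 2) + (if n i = 1 then 1 else 0)) = 2 := by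
        intro i; by_cases h : n i = 1 <;> simp [h]
      rw [Finset.sum_congr rfl fun i _ => hpt i, Finset.sum_const, Finset.card_univ,
        Fintype.card_fin, smul_eq_mul]
      ring
    omega
  have hIC : IC (Gr n) = ∑ i : Fin k, if n i = 1 then 1 else 2 := by
    rw [IC]
    have hset : {c | ∃ π, IsICPartition (Gr n) π ∧ π.card = c}
        = {∑ i : Fin k, if n i = 1 then 1 else 2} := by
      ext c
      simp only [Set.mem_setOf_eq, Set.mem_singleton_iff]
      constructor
      · rintro ⟨π, hπ, rfl⟩
        exact card_of_icPartition hn hπ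
      · rintro rfl
        exact ⟨pic hn, pic_isICPartition hn, pic_card hn⟩
    rw [hset, csSup_singleton]
  rw [← hsum]
  exact hIC

end ICNL
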